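/- arXiv:1711.04961 — 2 statements merged into one kernel-verified Lean document; each statement's English description precedes it below -/
import Mathlib

section
/- Given positive reals r1, r2 and a real z with z² ≠ 1, the distance between the points ((r1−r2)/(z²−1), 2z√(r1r2)/(z²−1)) and (r2, 0) equals |r2 + (r1+r2)/(z²−1)|, i.e., the circle of Okumura–Watanabe's Theorem 7 is tangent to the circle C2 of center (r2,0) and radius r2. -/
theorem stmt_4 (r1 r2 z : ℝ) (h1 : 0 < r1) (h2 : 0 < r2) (hz : z^2 ≠ 1) :
    Real.sqrt (((r1 - r2)/(z^2 - 1) - r2)^2 + (2*z*Real.sqrt (r1*r2)/(z^2 - 1) - 0)^2)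
      = |r2 + (r1 + r2)/(z^2 - 1)| := by
  have hd : z^2 - 1 ≠ 0 := sub_ne_zero.mpr hz
  obtain ⟨s, hs⟩ : ∃ s, Real.sqrt (r1*r2) = s := ⟨_, rfl⟩
  have hs2 : s ^ 2 = r1 * r2 := by
    rw [← hs]; exact Real.sq_sqrt (by positivity)
  rw [hs]
  have key : ((r1 - r2)/(z^2 - 1) - r2)^2 + (2*z*s/(z^2 - 1) - 0)^2
      = (r2 + (r1 + r2)/(z^2 - 1))^2 := by
    field_simp
    nlinarith [hs2, sq_nonneg z]
  rw [key, Real.sqrt_sq_eq_abs]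
end

section
/- For positive reals r1, r2 and real w with D = r1r2 + 2√(r1r2)(r1+r2)w + (r1²+r1r2+r2²)w² ≠ 0, the circle with center (x4, y4) = (r1r2(r1−r2)w²/D, 2r1r2(√(r1r2) + (r1+r2)w)w/D) and radius r4 = r1r2(r1+r2)w²/D satisfies: the distance from (x4, y4) to (−r1, 0) equals |r1 + r4| when the tangency is external, i.e., dist((x4,y4),(−r1,0))² = (r1 + r4)². -/
theorem stmt_14 (r1 r2 w : ℝ) (h1 : 0 < r1) (h2 : 0 < r2)
    (hD : r1*r2 + 2*Real.sqrt (r1*r2)*(r1 + r2)*w + (r1^2 + r1*r2 + r2^2)*w^2 ≠ 0) :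
    let D := r1*r2 + 2*Real.sqrt (r1*r2)*(r1 + r2)*w + (r1^2 + r1*r2 + r2^2)*w^2
    let x4 := r1*r2*(r1 - r2)*w^2/D
    let y4 := 2*r1*r2*(Real.sqrt (r1*r2) + (r1 + r2)*w)*w/D
    let r4 := r1*r2*(r1 + r2)*w^2/D
    (x4 - (-r1))^2 + (y4 - 0)^2 = (r1 + r4)^2 := by
  intro D x4 y4 r4
  have hs : Real.sqrt (r1*r2) * Real.sqrt (r1*r2) = r1*r2 :=
    Real.mul_self_sqrt (by positivity)
  show _ = _
  simp only [D, x4, y4, r4]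
  generalize hgen : Real.sqrt (r1*r2) = s at *
  have hD' : r1 * r2 + w * 2 * s * (r1 + r2) + w ^ 2 * (r1 * (r1 + r2) + r2 ^ 2) ≠ 0 := by
    convert hD using 1; ring
  field_simp
  linear_combination (4*r1^2*r2^2*w^2) * hs
end
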